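/- With B_m as above, (0,0) ∈ graph(B_m) for every m, so the graphical (Kuratowski) limit of graph(B_m) as m → ∞ exists and equals {(0,0)}; in particular this limit is the graph of a monotone set-valued operator that is not maximally monotone. -/

import Mathlib

/-- The piecewise linear functions `f n` from the paper. -/
noncomputable def f (n : ℕ) (t : ℝ) : ℝ :=
  if t ≤ (2:ℝ)^(-(n:ℤ)-1) ∨ (2:ℝ)^(-(n:ℤ)+2) ≤ t then 0
  else if t ≤ (2:ℝ)^(-(n:ℤ)) then 2*(t - (2:ℝ)^(-(n:ℤ)-1))
  else if t ≤ (2:ℝ)^(-(n:ℤ)+1) then (2:ℝ)^(-(n:ℤ))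
  else (1/2)*((2:ℝ)^(-(n:ℤ)+2) - t)

/-- The Hilbert space ℓ² of square-summable real sequences. -/
noncomputable abbrev l2 := lp (fun _ : ℕ => ℝ) 2

/-- A set `G ⊆ H × H` is monotone. -/
def IsMonotoneSet {H : Type*} [NormedAddCommGroup H] [InnerProductSpace ℝ H]
    (G : Set (H × H)) : Prop :=
  ∀ p ∈ G, ∀ q ∈ G, (inner ℝ (p.2 - q.2) (p.1 - q.1) : ℝ) ≥ 0

/-- A set `G ⊆ H × H` is maximally monotone. -/
def IsMaxMonotoneSet {H : Type*} [NormedAddCommGroup H] [InnerProductSpace ℝ H]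
    (G : Set (H × H)) : Prop :=
  IsMonotoneSet G ∧ ∀ G' : Set (H × H), IsMonotoneSet G' → G ⊆ G' → G' = G

lemma f_of_small {n : ℕ} {t : ℝ} (ht : t ≤ (2:ℝ)^(-(n:ℤ)-1)) : f n t = 0 := by
  simp [f, ht]

lemma f_plateau {n : ℕ} {t : ℝ} (h1 : (2:ℝ)^(-(n:ℤ)) ≤ t) (h2 : t ≤ (2:ℝ)^(-(n:ℤ)+1)) :
    f n t = (2:ℝ)^(-(n:ℤ)) := by
  have hlt1 : (2:ℝ)^(-(n:ℤ)-1) < (2:ℝ)^(-(n:ℤ)) :=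
    zpow_lt_zpow_right₀ (by norm_num) (by omega)
  have hlt2 : (2:ℝ)^(-(n:ℤ)+1) < (2:ℝ)^(-(n:ℤ)+2) :=
    zpow_lt_zpow_right₀ (by norm_num) (by omega)
  have hA : ¬ (t ≤ (2:ℝ)^(-(n:ℤ)-1) ∨ (2:ℝ)^(-(n:ℤ)+2) ≤ t) := by
    push_neg
    exact ⟨lt_of_lt_of_le hlt1 h1, lt_of_le_of_lt h2 hlt2⟩
  unfold f
  rw [if_neg hA]
  by_cases hB : t ≤ (2:ℝ)^(-(n:ℤ))
  · have ht : t = (2:ℝ)^(-(n:ℤ)) := le_antisymm hB h1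
    have hhalf : (2:ℝ)^(-(n:ℤ)-1) = (2:ℝ)^(-(n:ℤ)) / 2 := by
      rw [zpow_sub_one₀ (two_ne_zero)]
      ring
    rw [if_pos hB, ht, hhalf]
    ring
  · rw [if_neg hB, if_pos h2]

lemma f_big {t : ℝ} (h0 : 0 < t) (h1 : t < 1) :
    ∃ j : ℕ, f (j+1) t = (2:ℝ)^(Int.log 2 t) ∧ t ≤ 2 * (2:ℝ)^(Int.log 2 t) := by
  set L := Int.log 2 t with hLdef
  have hL1 : (2:ℝ)^L ≤ t := by
    have := Int.zpow_log_le_self (b := 2) (by norm_num) h0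
    simpa using this
  have hL2 : t < (2:ℝ)^(L+1) := by
    have := Int.lt_zpow_succ_log_self (b := 2) (by norm_num) t
    simpa using this
  have hLneg : L < 0 := by
    by_contra h
    push_neg at h
    have : (1:ℝ) ≤ (2:ℝ)^L := one_le_zpow₀ (by norm_num) h
    linarith
  refine ⟨(-L-1).toNat, ?_, ?_⟩
  · have he : -(((((-L-1).toNat : ℕ) + 1 : ℕ)) : ℤ) = L := by
      have := Int.toNat_of_nonneg (a := -L-1) (by omega)
      push_cast [this]
      omega
    have g1 : (2:ℝ)^(-((((-L-1).toNat : ℕ) + 1 : ℕ) : ℤ)) ≤ t := by rw [he]; exact hL1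
    have g2 : t ≤ (2:ℝ)^(-((((-L-1).toNat : ℕ) + 1 : ℕ) : ℤ)+1) := by
      rw [he]; exact hL2.le
    rw [f_plateau g1 g2, he]
  · have : (2:ℝ) * (2:ℝ)^L = (2:ℝ)^(L+1) := by
      rw [zpow_add_one₀ (two_ne_zero), mul_comm]
    rw [this]
    exact hL2.le

theorem graphical_limit_not_maximal
    (T : l2 → l2) (hT : ∀ (x : l2) (n : ℕ), T x n = f (n + 1) ‖x‖)
    (α : ℝ) (hα0 : α ≠ 0) (hα : |α| ≤ 2 / Real.sqrt 17)
    (B : ℕ → l2 → l2)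
    (hB : ∀ (m : ℕ) (x : l2), B m x = x + (α * m) • T ((m:ℝ)⁻¹ • x)) :
    (∀ m : ℕ, ((0, 0) : l2 × l2) ∈ {p : l2 × l2 | p.2 = B m p.1}) ∧
    -- outer limit ⊆ {(0,0)}
    (∀ (mk : ℕ → ℕ), Filter.Tendsto mk Filter.atTop Filter.atTop →
      ∀ pk : ℕ → l2 × l2, (∀ k, pk k ∈ {p : l2 × l2 | p.2 = B (mk k) p.1}) →
      ∀ p : l2 × l2, Filter.Tendsto pk Filter.atTop (nhds p) → p = (0, 0)) ∧
    -- {(0,0)} ⊆ inner limit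
    (∃ pk : ℕ → l2 × l2, (∀ m, pk m ∈ {p : l2 × l2 | p.2 = B m p.1}) ∧
      Filter.Tendsto pk Filter.atTop (nhds ((0, 0) : l2 × l2))) ∧
    IsMonotoneSet ({((0 : l2), (0 : l2))} : Set (l2 × l2)) ∧
    ¬ IsMaxMonotoneSet ({((0 : l2), (0 : l2))} : Set (l2 × l2)) := by
  have hT0 : T 0 = 0 := by
    apply lp.ext
    funext n
    have h0 : (0:ℝ) ≤ (2:ℝ)^(-((n+1:ℕ):ℤ)-1) := le_of_lt (zpow_pos (by norm_num) _)
    have : T 0 n = 0 := by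
      rw [hT, norm_zero, f_of_small h0]
    simpa [lp.coeFn_zero] using this
  have hB0 : ∀ m : ℕ, B m 0 = 0 := by
    intro m
    rw [hB]
    simp [hT0]
  -- coordinate formula
  have hBcoord : ∀ (m : ℕ) (x : l2) (n : ℕ),
      (B m x) n = x n + (α * m) * f (n+1) ((m:ℝ)⁻¹ * ‖x‖) := by
    intro m x n
    rw [hB]
    have hn : ‖(m:ℝ)⁻¹ • x‖ = (m:ℝ)⁻¹ * ‖x‖ := by
      rw [norm_smul, Real.norm_eq_abs, abs_inv, Nat.abs_cast]
    have hadd := lp.coeFn_add x ((α * m) • T ((m:ℝ)⁻¹ • x))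
    have hsmul := lp.coeFn_smul (α * m) (T ((m:ℝ)⁻¹ • x))
    calc (x + (α * m) • T ((m:ℝ)⁻¹ • x)) n
        = x n + ((α * m) • T ((m:ℝ)⁻¹ • x)) n := by
          rw [congrFun hadd n]; rfl
      _ = x n + (α * m) * (T ((m:ℝ)⁻¹ • x)) n := by
          rw [congrFun hsmul n]; rfl
      _ = x n + (α * m) * f (n+1) ((m:ℝ)⁻¹ * ‖x‖) := by
          rw [hT, hn]
  -- coordinate convergence
  have hcoord : ∀ (zk : ℕ → l2) (z : l2), Filter.Tendsto zk Filter.atTop (nhds z) →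
      ∀ n : ℕ, Filter.Tendsto (fun k => zk k n) Filter.atTop (nhds (z n)) := by
    intro zk z hz n
    rw [Metric.tendsto_atTop] at hz ⊢
    intro ε hε
    obtain ⟨N, hN⟩ := hz ε hε
    refine ⟨N, fun k hk => lt_of_le_of_lt ?_ (hN k hk)⟩
    have h1 : dist (zk k n) (z n) = ‖(zk k - z) n‖ := by
      simp only [dist_eq_norm, lp.coeFn_sub, Pi.sub_apply]
    rw [h1, dist_eq_norm]
    exact lp.norm_apply_le_norm (by norm_num) (zk k - z) n
  refine ⟨?_, ?_, ?_, ?_, ?_⟩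
  · -- (0,0) in every graph
    intro m
    show (0:l2) = B m 0
    rw [hB0]
  · -- outer limit
    intro mk hmk pk hpk p hp
    obtain ⟨x, y⟩ := p
    have hx : Filter.Tendsto (fun k => (pk k).1) Filter.atTop (nhds x) :=
      (continuous_fst.tendsto (x, y)).comp hp
    have hy : Filter.Tendsto (fun k => (pk k).2) Filter.atTop (nhds y) :=
      (continuous_snd.tendsto (x, y)).comp hp
    have hxnorm : Filter.Tendsto (fun k => ‖(pk k).1‖) Filter.atTop (nhds ‖x‖) := hx.norm
    have hbound : ∀ᶠ k in Filter.atTop, ‖(pk k).1‖ < ‖x‖ + 1 :=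
      hxnorm.eventually_lt_const (by linarith)
    -- y = x
    have hyx : y = x := by
      apply lp.ext
      funext n
      have hC : (0:ℝ) < (‖x‖ + 1) * (2:ℝ)^((n:ℤ)+2) := by positivity
      have hm : ∀ᶠ k in Filter.atTop, (⌈(‖x‖ + 1) * (2:ℝ)^((n:ℤ)+2)⌉₊ : ℕ) ≤ mk k :=
        hmk.eventually_ge_atTop _
      have hev : ∀ᶠ k in Filter.atTop, (pk k).2 n = (pk k).1 n := by
        filter_upwards [hbound, hm] with k hk1 hk2
        have hmk1 : (‖x‖ + 1) * (2:ℝ)^((n:ℤ)+2) ≤ (mk k : ℝ) := by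
          calc (‖x‖ + 1) * (2:ℝ)^((n:ℤ)+2)
              ≤ (⌈(‖x‖ + 1) * (2:ℝ)^((n:ℤ)+2)⌉₊ : ℝ) := Nat.le_ceil _
            _ ≤ (mk k : ℝ) := by exact_mod_cast hk2
        have hmpos : (0:ℝ) < (mk k : ℝ) := lt_of_lt_of_le hC hmk1
        have ht : (mk k : ℝ)⁻¹ * ‖(pk k).1‖ ≤ (2:ℝ)^(-((n+1:ℕ):ℤ)-1) := by
          rw [inv_mul_le_iff₀ hmpos]
          have he : (-((n+1:ℕ):ℤ)-1) = -((n:ℤ)+2) := by push_cast; omega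
          rw [he, zpow_neg]
          calc ‖(pk k).1‖ ≤ ‖x‖ + 1 := hk1.le
            _ = ((2:ℝ)^((n:ℤ)+2))⁻¹ * ((‖x‖ + 1) * (2:ℝ)^((n:ℤ)+2)) := by
                field_simp
            _ ≤ ((2:ℝ)^((n:ℤ)+2))⁻¹ * (mk k : ℝ) := by
                apply mul_le_mul_of_nonneg_left hmk1
                positivity
            _ = (mk k : ℝ) * ((2:ℝ)^((n:ℤ)+2))⁻¹ := mul_comm _ _
        have := hpk k
        rw [Set.mem_setOf_eq] at this
        have hcoordeq : (pk k).2 n = (pk k).1 n := by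
          rw [this, hBcoord, f_of_small ht, mul_zero, add_zero]
        exact hcoordeq
      have h1 : Filter.Tendsto (fun k => (pk k).2 n) Filter.atTop (nhds (x n)) :=
        (hcoord _ x hx n).congr' (by filter_upwards [hev] with k hk; exact hk.symm)
      exact tendsto_nhds_unique (hcoord _ y hy n) h1
    -- x = 0
    have hx0 : x = 0 := by
      by_contra hne
      have hxpos : 0 < ‖x‖ := norm_pos_iff.2 hne
      have hαpos : 0 < |α| := abs_pos.2 hα0
      have hdiff : Filter.Tendsto (fun k => ‖(pk k).2 - (pk k).1‖) Filter.atTop (nhds 0) := by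
        have h := (hy.sub hx).norm
        rw [hyx, sub_self, norm_zero] at h
        exact h
      have h1 : ∀ᶠ k in Filter.atTop, ‖x‖/2 < ‖(pk k).1‖ :=
        hxnorm.eventually_const_lt (by linarith)
      have h3 : ∀ᶠ k in Filter.atTop, (⌈‖x‖ + 1⌉₊ + 1 : ℕ) ≤ mk k :=
        hmk.eventually_ge_atTop _
      have hev : ∀ᶠ k in Filter.atTop, |α| * ‖x‖ / 4 ≤ ‖(pk k).2 - (pk k).1‖ := by
        filter_upwards [h1, hbound, h3] with k hk1 hk2 hk3
        set m := mk k with hmdef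
        have hmR : (‖x‖ + 1) < (m : ℝ) := by
          have : ((⌈‖x‖ + 1⌉₊ + 1 : ℕ) : ℝ) ≤ (m : ℝ) := by exact_mod_cast hk3
          have h4 : (‖x‖ + 1) ≤ (⌈‖x‖ + 1⌉₊ : ℝ) := Nat.le_ceil _
          push_cast at this
          linarith
        have hmpos : (0:ℝ) < (m:ℝ) := by linarith [norm_nonneg x]
        set t := (m:ℝ)⁻¹ * ‖(pk k).1‖ with htdef
        have htpos : 0 < t := by
          apply mul_pos (inv_pos.2 hmpos)
          linarith
        have htlt : t < 1 := by
          rw [htdef, inv_mul_lt_one₀ hmpos]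
          linarith
        obtain ⟨j, hj1, hj2⟩ := f_big htpos htlt
        have hcoordval : (pk k).2 j - (pk k).1 j = (α * m) * (2:ℝ)^(Int.log 2 t) := by
          have := hpk k
          rw [Set.mem_setOf_eq] at this
          rw [this, hBcoord, ← htdef, hj1]
          ring
        have hlow : |α| * ‖x‖ / 4 ≤ |(pk k).2 j - (pk k).1 j| := by
          rw [hcoordval, abs_mul, abs_mul]
          have hzpos : (0:ℝ) < (2:ℝ)^(Int.log 2 t) := zpow_pos (by norm_num) _
          rw [abs_of_pos hzpos, Nat.abs_cast]
          have key : t / 2 ≤ (2:ℝ)^(Int.log 2 t) := by linarith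
          calc |α| * ‖x‖ / 4 ≤ |α| * (‖(pk k).1‖ / 2) := by
                rw [div_le_iff₀ (by norm_num : (0:ℝ) < 4)]
                calc |α| * ‖x‖ ≤ |α| * (2 * ‖(pk k).1‖) := by
                      apply mul_le_mul_of_nonneg_left _ (abs_nonneg α)
                      linarith
                  _ = |α| * (‖(pk k).1‖ / 2) * 4 := by ring
            _ = |α| * ((m:ℝ) * (t / 2)) := by
                rw [htdef]
                field_simp
            _ ≤ |α| * ((m:ℝ) * (2:ℝ)^(Int.log 2 t)) := by
                apply mul_le_mul_of_nonneg_left _ (abs_nonneg α)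
                exact mul_le_mul_of_nonneg_left key hmpos.le
            _ = |α| * (m:ℝ) * (2:ℝ)^(Int.log 2 t) := by ring
        have hub : |(pk k).2 j - (pk k).1 j| ≤ ‖(pk k).2 - (pk k).1‖ := by
          have h5 : ((pk k).2 - (pk k).1) j = (pk k).2 j - (pk k).1 j := by
            rw [congrFun (lp.coeFn_sub (pk k).2 (pk k).1) j]; rfl
          calc |(pk k).2 j - (pk k).1 j| = ‖((pk k).2 - (pk k).1) j‖ := by
                rw [h5]; rfl
            _ ≤ ‖(pk k).2 - (pk k).1‖ := lp.norm_apply_le_norm (by norm_num) _ j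
        linarith
      have hle : |α| * ‖x‖ / 4 ≤ 0 := ge_of_tendsto hdiff hev
      nlinarith
    rw [hx0] at hyx
    rw [hx0, hyx]
  · -- inner limit
    exact ⟨fun _ => (0, 0), fun m => by show (0:l2) = B m 0; rw [hB0], tendsto_const_nhds⟩
  · -- monotone
    intro p hp q hq
    rw [Set.mem_singleton_iff] at hp hq
    subst hp; subst hq
    simp
  · -- not maximal
    rintro ⟨-, hmax⟩
    have hmono : IsMonotoneSet {p : l2 × l2 | p.2 = p.1} := by
      intro p hp q hq
      rw [Set.mem_setOf_eq] at hp hq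
      rw [hp, hq]
      exact real_inner_self_nonneg
    have hsub : ({((0 : l2), (0 : l2))} : Set (l2 × l2)) ⊆ {p : l2 × l2 | p.2 = p.1} := by
      intro p hp
      rw [Set.mem_singleton_iff] at hp
      rw [hp]
      rfl
    have heq := hmax _ hmono hsub
    set v : l2 := lp.single 2 0 (1:ℝ) with hv
    have hv0 : v ≠ 0 := by
      intro h
      have h1 : v 0 = 1 := by
        rw [hv]
        exact lp.single_apply_self (E := fun _ : ℕ => ℝ) 2 0 (1:ℝ)
      rw [h] at h1
      have h2 : (0:l2) 0 = 0 := by rw [congrFun (lp.coeFn_zero (fun _ : ℕ => ℝ) 2) 0]; rfl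
      rw [h2] at h1
      exact one_ne_zero h1.symm
    have hvmem : ((v, v) : l2 × l2) ∈ {p : l2 × l2 | p.2 = p.1} := rfl
    rw [heq, Set.mem_singleton_iff, Prod.mk.injEq] at hvmem
    exact hv0 hvmem.1
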